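/- arXiv:1708.02294 — 2 statements merged into one kernel-verified Lean document; each statement's English description precedes it below -/
import Mathlib

section
/- Let G, H be connected graphs of diameters d_G, d_H, and let g ∈ R^{d_G+1}, h ∈ R^{d_H+1} be vectors such that g_k · h_l depends only on k + l; define f_{k+l} := g_k h_l. Then the generalized distance matrix satisfies M(f; G □ H) = M(g; G) ⊗ M(h; H). -/
open Matrix Kronecker

/-- The generalized distance matrix `M(f;G)`, whose `(x,y)` entry is `f (dist x y)`. -/
noncomputable def genDistMatrix {V : Type*} (G : SimpleGraph V) (f : ℕ → ℝ) : Matrix V V ℝ :=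
  Matrix.of fun x y => f (G.dist x y)

/-- The diameter of a finite graph. -/
noncomputable def gdiam {V : Type*} [Fintype V] (G : SimpleGraph V) : ℕ :=
  Finset.univ.sup fun p : V × V => G.dist p.1 p.2

private lemma dist_le_walk_length {α β : Type*} {G : SimpleGraph α} {H : SimpleGraph β}
    (hG : G.Connected) (hH : H.Connected) :
    ∀ {x y : α × β} (w : (G □ H).Walk x y),
      G.dist x.1 y.1 + H.dist x.2 y.2 ≤ w.length := by
  intro x y w
  induction w with
  | nil => simp
  | @cons x y' z hadj w ih =>
    rw [SimpleGraph.Walk.length_cons]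
    rcases hadj with ⟨hGadj, he⟩ | ⟨hHadj, he⟩
    · have h1 : G.dist x.1 z.1 ≤ 1 + G.dist y'.1 z.1 := by
        have := hG.dist_triangle (v := y'.1) (u := x.1) (w := z.1)
        rwa [SimpleGraph.dist_eq_one_iff_adj.mpr hGadj] at this
      have h2 : H.dist x.2 z.2 = H.dist y'.2 z.2 := by rw [he]
      omega
    · have h1 : H.dist x.2 z.2 ≤ 1 + H.dist y'.2 z.2 := by
        have := hH.dist_triangle (v := y'.2) (u := x.2) (w := z.2)
        rwa [SimpleGraph.dist_eq_one_iff_adj.mpr hHadj] at this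
      have h2 : G.dist x.1 z.1 = G.dist y'.1 z.1 := by rw [he]
      omega

private lemma boxProd_dist {α β : Type*} {G : SimpleGraph α} {H : SimpleGraph β}
    (hG : G.Connected) (hH : H.Connected) (x y : α × β) :
    (G □ H).dist x y = G.dist x.1 y.1 + H.dist x.2 y.2 := by
  refine le_antisymm ?_ ?_
  · obtain ⟨w1, hw1⟩ := hG.exists_walk_length_eq_dist x.1 y.1
    obtain ⟨w2, hw2⟩ := hH.exists_walk_length_eq_dist x.2 y.2
    have := SimpleGraph.dist_le ((w1.boxProdLeft H x.2).append (w2.boxProdRight G y.1))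
    have e1 : (w1.boxProdLeft H x.2).length = G.dist x.1 y.1 := by
      rw [← hw1]; exact SimpleGraph.Walk.length_map _ _
    have e2 : (w2.boxProdRight G y.1).length = H.dist x.2 y.2 := by
      rw [← hw2]; exact SimpleGraph.Walk.length_map _ _
    rwa [SimpleGraph.Walk.length_append, e1, e2] at this
  · obtain ⟨w, hw⟩ := (hG.boxProd hH).exists_walk_length_eq_dist x y
    rw [← hw]
    exact dist_le_walk_length hG hH w

theorem genDistMatrix_boxProd {α β : Type*} [Fintype α] [Fintype β]
    (G : SimpleGraph α) (H : SimpleGraph β) (hG : G.Connected) (hH : H.Connected)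
    (g h f : ℕ → ℝ)
    (hf : ∀ k l : ℕ, k ≤ gdiam G → l ≤ gdiam H → f (k + l) = g k * h l) :
    genDistMatrix (G □ H) f = genDistMatrix G g ⊗ₖ genDistMatrix H h := by
  ext ⟨x1, x2⟩ ⟨y1, y2⟩
  simp only [genDistMatrix, Matrix.of_apply, Matrix.kroneckerMap_apply]
  rw [boxProd_dist hG hH]
  exact hf _ _ (Finset.le_sup (f := fun p : α × α => G.dist p.1 p.2)
      (Finset.mem_univ (x1, y1)))
    (Finset.le_sup (f := fun p : β × β => H.dist p.1 p.2) (Finset.mem_univ (x2, y2)))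
end

section
/- For any connected graphs G and H and any real z, the generalized distance matrix with f_m = z^m satisfies M(z; G □ H) = M(z; G) ⊗ M(z; H), where M(z; G)_{x,y} = z^{dist_G(x,y)}. -/
open Matrix Kronecker

namespace SimpleGraph

lemma walk_proj_length_le {α β : Type*} [DecidableEq α] [DecidableEq β]
    {G : SimpleGraph α} {H : SimpleGraph β} [DecidableRel G.Adj] [DecidableRel H.Adj]
    {x y : α × β} (w : (G □ H).Walk x y) :
    w.ofBoxProdLeft.length + w.ofBoxProdRight.length ≤ w.length := by
  induction w with
  | nil => simp [Walk.ofBoxProdLeft, Walk.ofBoxProdRight]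
  | @cons u v t h w ih =>
    rw [Walk.ofBoxProdLeft, Walk.ofBoxProdRight, Walk.length_cons]
    rcases h with hG | hH
    · rw [Or.by_cases, dif_pos hG]
      have h2 : ¬ (H.Adj u.2 v.2 ∧ u.1 = v.1) := by
        rintro ⟨hH, -⟩
        exact (hG.2 ▸ hH).ne rfl
      rw [Or.by_cases, dif_neg h2]
      obtain ⟨hG1, hG2⟩ := hG
      cases u; cases v; cases hG2
      simp only [Walk.length_cons]
      have := ih
      omega
    · have h1 : ¬ (G.Adj u.1 v.1 ∧ u.2 = v.2) := by
        rintro ⟨hG, -⟩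
        exact (hH.2 ▸ hG).ne rfl
      rw [Or.by_cases, dif_neg h1, Or.by_cases, dif_pos hH]
      obtain ⟨hH1, hH2⟩ := hH
      cases u; cases v; cases hH2
      simp only [Walk.length_cons]
      have := ih
      omega

lemma boxProd_dist {α β : Type*} {G : SimpleGraph α} {H : SimpleGraph β}
    (hG : G.Connected) (hH : H.Connected) (x y : α × β) :
    (G □ H).dist x y = G.dist x.1 y.1 + H.dist x.2 y.2 := by
  classical
  obtain ⟨a, b⟩ := x
  obtain ⟨c, d⟩ := y
  dsimp only
  have hGH : (G □ H).Connected := hG.boxProd hH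
  apply le_antisymm
  · obtain ⟨p, hp⟩ := hG.exists_walk_length_eq_dist a c
    obtain ⟨q, hq⟩ := hH.exists_walk_length_eq_dist b d
    have hw : ((p.boxProdLeft H b).append (q.boxProdRight G c)).length =
        G.dist a c + H.dist b d := by
      rw [Walk.length_append, ← hp, ← hq]
      exact congrArg₂ (· + ·) (Walk.length_map _ _) (Walk.length_map _ _)
    calc (G □ H).dist (a, b) (c, d) ≤ _ := dist_le _
      _ = _ := hw
  · obtain ⟨w, hw⟩ := hGH.exists_walk_length_eq_dist (a, b) (c, d)
    have h1 : G.dist a c ≤ w.ofBoxProdLeft.length := dist_le _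
    have h2 : H.dist b d ≤ w.ofBoxProdRight.length := dist_le _
    have := walk_proj_length_le w
    omega

end SimpleGraph

/-- The matrix `M(z;G)` whose `(x,y)` entry is `z ^ dist x y`. -/
noncomputable def zDistMatrix {V : Type*} (G : SimpleGraph V) (z : ℝ) : Matrix V V ℝ :=
  Matrix.of fun x y => z ^ (G.dist x y)

theorem zDistMatrix_boxProd {α β : Type*} [Fintype α] [Fintype β]
    (G : SimpleGraph α) (H : SimpleGraph β) (hG : G.Connected) (hH : H.Connected)
    (z : ℝ) :
    zDistMatrix (G □ H) z = zDistMatrix G z ⊗ₖ zDistMatrix H z := by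
  ext x y
  simp [zDistMatrix, kroneckerMap_apply, SimpleGraph.boxProd_dist hG hH, pow_add]
end
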